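/- (Macpherson–Neumann) The symmetric group S = Sym(ω) cannot be written as the union of a countable chain of proper subgroups: if ⟨G_n : n < ω⟩ is an increasing chain of subgroups of S with S = ⋃_n G_n, then G_n = S for some n. Equivalently, the cofinality c(S) is uncountable. -/

import Mathlib

open Equiv Set
namespace MN



variable {α : Type*}

/-- `g` is supported inside `S`: it fixes everything outside `S`. -/
def SuppIn (g : Equiv.Perm α) (S : Set α) : Prop := ∀ x ∉ S, g x = x

lemma SuppIn.mono {g : Perm α} {S T : Set α} (h : SuppIn g S) (hST : S ⊆ T) : SuppIn g T :=
  fun x hx => h x fun hxS => hx (hST hxS)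

lemma suppIn_one (S : Set α) : SuppIn (1 : Perm α) S := fun _ _ => rfl

lemma SuppIn.mul {g h : Perm α} {S : Set α} (hg : SuppIn g S) (hh : SuppIn h S) :
    SuppIn (g * h) S := fun x hx => by
  simp only [Perm.mul_apply, hh x hx, hg x hx]

lemma SuppIn.inv {g : Perm α} {S : Set α} (hg : SuppIn g S) : SuppIn g⁻¹ S := fun x hx => by
  conv_lhs => rw [← hg x hx]
  simp

lemma SuppIn.mem_iff {g : Perm α} {S : Set α} (hg : SuppIn g S) (x : α) : g x ∈ S ↔ x ∈ S := by
  constructor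
  · intro h
    by_contra hx
    rw [hg x hx] at h
    exact hx h
  · intro hx
    by_contra h
    have h2 := hg _ h
    have h3 := g.injective h2
    rw [← h3] at hx
    exact h hx

lemma SuppIn.image {g : Perm α} {S : Set α} (hg : SuppIn g S) : g '' S = S := by
  ext y
  constructor
  · rintro ⟨x, hx, rfl⟩
    exact (hg.mem_iff x).2 hx
  · intro hy
    exact ⟨g⁻¹ y, (hg.inv.mem_iff y).2 hy, by simp⟩

lemma SuppIn.conj {g c : Perm α} {S : Set α} (hg : SuppIn g S) :
    SuppIn (c * g * c⁻¹) (c '' S) := by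
  intro x hx
  have h1 : c⁻¹ x ∉ S := fun h => hx ⟨c⁻¹ x, h, by simp⟩
  simp only [Perm.mul_apply, hg _ h1]
  simp

/-- Decompose a permutation preserving `X` into a product of a perm supported in `X`
and one supported in `Xᶜ`. -/
lemma exists_decomp {g : Perm α} {X : Set α} (hgX : ∀ x, x ∈ X ↔ g x ∈ X) :
    ∃ u v : Perm α, g = u * v ∧ SuppIn u X ∧ SuppIn v Xᶜ := by
  classical
  have hgX' : ∀ x, x ∈ Xᶜ ↔ g x ∈ Xᶜ := by
    intro x
    simp [mem_compl_iff, not_iff_not, ← hgX x]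
  refine ⟨Perm.ofSubtype (g.subtypePerm (fun x => (hgX x).symm)), Perm.ofSubtype (g.subtypePerm (fun x => (hgX' x).symm)), ?_, ?_, ?_⟩
  · ext x
    by_cases hx : x ∈ X
    · have hv : Perm.ofSubtype (g.subtypePerm (fun x => (hgX' x).symm)) x = x :=
        Perm.ofSubtype_apply_of_not_mem _ (by simpa using hx)
      have hu : Perm.ofSubtype (g.subtypePerm (fun x => (hgX x).symm)) x = g x :=
        Perm.ofSubtype_apply_of_mem _ hx
      simp [Perm.mul_apply, hv, hu]
    · have hv : Perm.ofSubtype (g.subtypePerm (fun x => (hgX' x).symm)) x = g x :=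
        Perm.ofSubtype_apply_of_mem _ (by simpa using hx)
      have hgx : g x ∉ X := fun h => hx ((hgX x).2 h)
      have hu : Perm.ofSubtype (g.subtypePerm (fun x => (hgX x).symm)) (g x) = g x :=
        Perm.ofSubtype_apply_of_not_mem _ hgx
      simp [Perm.mul_apply, hv, hu]
  · intro x hx
    exact Perm.ofSubtype_apply_of_not_mem _ hx
  · intro x hx
    exact Perm.ofSubtype_apply_of_not_mem _ hx

/-- Equivs between countable sets. -/
lemma equiv_of_infinite [Countable α] {s t : Set α} (hs : s.Infinite) (ht : t.Infinite) :
    Nonempty (s ≃ t) := by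
  haveI := hs.to_subtype
  haveI := ht.to_subtype
  exact nonempty_equiv_of_countable

lemma equiv_of_finite {s t : Set α} (hs : s.Finite) (ht : t.Finite) (h : s.ncard = t.ncard) :
    Nonempty (s ≃ t) := by
  haveI := hs.to_subtype
  haveI := ht.to_subtype
  refine Finite.card_eq.mp ?_
  rwa [Nat.card_coe_set_eq, Nat.card_coe_set_eq]

/-- Assemble a permutation supported in `W` mapping `S` onto `T`. -/
lemma exists_perm_image {W S T : Set α} (hSW : S ⊆ W) (hTW : T ⊆ W)
    (h1 : Nonempty (S ≃ T)) (h2 : Nonempty ((W \ S : Set α) ≃ ((W \ T : Set α)))) :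
    ∃ π : Perm α, SuppIn π W ∧ π '' S = T := by
  classical
  obtain ⟨e1⟩ := h1
  obtain ⟨e2⟩ := h2
  set f : α → α := fun x =>
    if h : x ∈ S then (e1 ⟨x, h⟩ : α) else if h : x ∈ W \ S then (e2 ⟨x, h⟩ : α) else x with hf
  set finv : α → α := fun x =>
    if h : x ∈ T then (e1.symm ⟨x, h⟩ : α) else if h : x ∈ W \ T then (e2.symm ⟨x, h⟩ : α) else x
    with hfinv
  have hfS : ∀ x (h : x ∈ S), f x = (e1 ⟨x, h⟩ : α) := by
    intro x h; simp [hf, h]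
  have hfWS : ∀ x (h : x ∈ W \ S), f x = (e2 ⟨x, h⟩ : α) := by
    intro x h; simp only [hf]; rw [dif_neg h.2, dif_pos h]
  have hfO : ∀ x, x ∉ W → f x = x := by
    intro x h
    simp only [hf]
    rw [dif_neg (fun hs => h (hSW hs)), dif_neg (fun (hs : x ∈ W \ S) => h hs.1)]
  have hgT : ∀ x (h : x ∈ T), finv x = (e1.symm ⟨x, h⟩ : α) := by
    intro x h; simp [hfinv, h]
  have hgWT : ∀ x (h : x ∈ W \ T), finv x = (e2.symm ⟨x, h⟩ : α) := by
    intro x h; simp only [hfinv]; rw [dif_neg h.2, dif_pos h]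
  have hgO : ∀ x, x ∉ W → finv x = x := by
    intro x h
    simp only [hfinv]
    rw [dif_neg (fun hs => h (hTW hs)), dif_neg (fun (hs : x ∈ W \ T) => h hs.1)]
  have hli : Function.LeftInverse finv f := by
    intro x
    by_cases hx : x ∈ S
    · rw [hfS x hx, hgT _ (e1 ⟨x, hx⟩).2]
      simp
    · by_cases hx2 : x ∈ W \ S
      · rw [hfWS x hx2, hgWT _ (e2 ⟨x, hx2⟩).2]
        simp
      · have hxW : x ∉ W := fun h => hx2 ⟨h, hx⟩
        rw [hfO x hxW, hgO x hxW]
  have hri : Function.RightInverse finv f := by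
    intro x
    by_cases hx : x ∈ T
    · rw [hgT x hx, hfS _ (e1.symm ⟨x, hx⟩).2]
      simp
    · by_cases hx2 : x ∈ W \ T
      · rw [hgWT x hx2, hfWS _ (e2.symm ⟨x, hx2⟩).2]
        simp
      · have hxW : x ∉ W := fun h => hx2 ⟨h, hx⟩
        rw [hgO x hxW, hfO x hxW]
  refine ⟨⟨f, finv, hli, hri⟩, ?_, ?_⟩
  · intro x hx
    exact hfO x hx
  · ext y
    constructor
    · rintro ⟨x, hx, rfl⟩
      show f x ∈ T
      rw [hfS x hx]
      exact (e1 ⟨x, hx⟩).2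
    · intro hy
      refine ⟨(e1.symm ⟨y, hy⟩ : α), (e1.symm ⟨y, hy⟩).2, ?_⟩
      show f _ = y
      rw [hfS _ (e1.symm ⟨y, hy⟩).2]
      simp
lemma split_infinite [Countable μ] {s : Set μ} (hs : s.Infinite) :
    ∃ t ⊆ s, t.Infinite ∧ (s \ t).Infinite := by
  haveI := hs.to_subtype
  obtain ⟨_⟩ := nonempty_denumerable ↥s
  set d : ↥s ≃ ℕ := Denumerable.eqv ↥s with hd
  refine ⟨{x : μ | ∃ h : x ∈ s, Even (d ⟨x, h⟩)}, fun x hx => hx.1, ?_, ?_⟩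
  · apply Set.infinite_of_injective_forall_mem (f := fun n : ℕ => (d.symm (2 * n) : μ))
    case hi =>
      intro m n hmn
      have := d.symm.injective (Subtype.ext hmn)
      omega
    case hf =>
      intro n
      refine ⟨(d.symm (2 * n)).2, ?_⟩
      have : (⟨(d.symm (2 * n) : μ), (d.symm (2 * n)).2⟩ : ↥s) = d.symm (2 * n) := rfl
      rw [this]
      simp [Nat.even_iff]
  · apply Set.infinite_of_injective_forall_mem (f := fun n : ℕ => (d.symm (2 * n + 1) : μ))
    case hi =>
      intro m n hmn
      have := d.symm.injective (Subtype.ext hmn)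
      omega
    case hf =>
      intro n
      refine ⟨(d.symm (2 * n + 1)).2, ?_⟩
      rintro ⟨h, hev⟩
      have : (⟨(d.symm (2 * n + 1) : μ), h⟩ : ↥s) = d.symm (2 * n + 1) := rfl
      rw [this] at hev
      simp [Nat.even_iff] at hev

lemma SuppIn.image_diff {π : Perm α} {W C : Set α} (hπ : SuppIn π W) :
    π '' (C \ W) = C \ W := by
  ext y
  constructor
  · rintro ⟨x, hx, rfl⟩
    rwa [hπ x hx.2]
  · intro hy
    exact ⟨y, hy, hπ y hy.2⟩

lemma image_of_inter {π : Perm α} {W C T : Set α} (hπ : SuppIn π W)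
    (himg : π '' (C ∩ W) = T) : π '' C = T ∪ (C \ W) := by
  conv_lhs => rw [← Set.inter_union_diff C W]
  rw [Set.image_union, himg, hπ.image_diff]

lemma perm_mul_image (f g : Perm α) (C : Set α) : (f * g) '' C = f '' (g '' C) := by
  rw [← Set.image_comp]
  rfl

lemma perm_compl_image (f : Perm α) (C : Set α) : (f '' C)ᶜ = f '' Cᶜ :=
  (Equiv.image_compl f C).symm

lemma step2 [Countable α] {a b c : Set α}
    (hXc : (a ∪ b)ᶜ = c) (hYc : (b ∪ c)ᶜ = a)
    (ha : a.Infinite) (hb : b.Infinite) (hc : c.Infinite)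
    {H : Subgroup (Perm α)}
    (hX : ∀ g : Perm α, SuppIn g (a ∪ b) → g ∈ H)
    (hY : ∀ g : Perm α, SuppIn g (b ∪ c) → g ∈ H) :
    H = ⊤ := by
  have mem_c : ∀ x, x ∈ c ↔ x ∉ a ∪ b := by rw [← hXc]; intro x; rfl
  have mem_a : ∀ x, x ∈ a ↔ x ∉ b ∪ c := by rw [← hYc]; intro x; rfl
  have hb_not_a : ∀ x, x ∈ b → x ∉ a := fun x hxb hxa =>
    (mem_a x).1 hxa (Or.inl hxb)
  have hc_not_b : ∀ x, x ∈ c → x ∉ b := fun x hxc hxb =>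
    (mem_c x).1 hxc (Or.inr hxb)
  obtain ⟨b1, hb1b, hb1, hb2⟩ := split_infinite hb
  -- the key claim : any infinite/co-infinite set can be mapped onto a ∪ b by an element of H
  have claim : ∀ C : Set α, C.Infinite → Cᶜ.Infinite →
      ∃ k : Perm α, k ∈ H ∧ k '' C = a ∪ b := by
    intro C hC hCc
    -- Stage 1 : make C ∩ (a ∪ b) infinite
    have stage1 : ∃ k : Perm α, k ∈ H ∧ ((k '' C) ∩ (a ∪ b)).Infinite ∧
        ((k '' C)ᶜ).Infinite ∧ (k '' C).Infinite := by
      by_cases h1 : (C ∩ (a ∪ b)).Infinite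
      · exact ⟨1, H.one_mem, by simpa using h1, by simpa using hCc, by simpa using hC⟩
      · have hfin : (C ∩ (a ∪ b)).Finite := Set.not_infinite.mp h1
        have hCbc : (C ∩ (b ∪ c)).Infinite := by
          refine Set.Infinite.mono ?_ (hC.diff hfin)
          rintro x ⟨hxC, hn⟩
          have hxab : x ∉ a ∪ b := fun h => hn ⟨hxC, h⟩
          exact ⟨hxC, Or.inr ((mem_c x).2 hxab)⟩
        have hbD : (b \ C).Infinite := by
          refine Set.Infinite.mono ?_ (hb.diff hfin)
          rintro x ⟨hxb, hn⟩
          refine ⟨hxb, fun hxC => hn ⟨hxC, Or.inr hxb⟩⟩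
        obtain ⟨π, hπW, hπimg⟩ := exists_perm_image
          (W := b ∪ c) (S := C ∩ (b ∪ c)) (T := b1)
          Set.inter_subset_right (hb1b.trans Set.subset_union_left)
          (equiv_of_infinite hCbc hb1)
          (by
            refine equiv_of_infinite ?_ ?_
            · refine Set.Infinite.mono ?_ hbD
              rintro x ⟨hxb, hxC⟩
              exact ⟨Or.inl hxb, fun h => hxC h.1⟩
            · refine Set.Infinite.mono ?_ hc
              intro x hxc
              exact ⟨Or.inr hxc, fun h => hc_not_b x hxc (hb1b h)⟩)
        refine ⟨π, hY π hπW, ?_, ?_, ?_⟩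
        · rw [image_of_inter hπW hπimg]
          refine Set.Infinite.mono ?_ hb1
          intro x hx
          exact ⟨Or.inl hx, Or.inr (hb1b hx)⟩
        · rw [perm_compl_image]
          exact hCc.image (π.injective.injOn)
        · exact hC.image (π.injective.injOn)
    obtain ⟨k₁, hk₁H, hS1, hC1c, hC1⟩ := stage1
    set C₁ := k₁ '' C with hC₁def
    -- Stage 2 : absorb `a` into the set, keeping infinitely much of `b` inside
    have stage2 : ∃ k : Perm α, k ∈ H ∧ a ⊆ (k '' C₁) ∧ ((k '' C₁) ∩ b).Infinite ∧
        ((k '' C₁)ᶜ).Infinite := by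
      have hWS : (a ∪ b) \ (C₁ ∩ (a ∪ b)) = (a ∪ b) \ C₁ := Set.diff_inter_self_eq_diff
      by_cases hR : ((a ∪ b) \ C₁).Infinite
      · -- T := a ∪ b1
        have hWT : (a ∪ b) \ (a ∪ b1) = b \ b1 := by
          ext x
          constructor
          · rintro ⟨hx, hn⟩
            have hxa : x ∉ a := fun h => hn (Or.inl h)
            have hxb : x ∈ b := hx.resolve_left hxa
            exact ⟨hxb, fun h => hn (Or.inr h)⟩
          · rintro ⟨hxb, hxn⟩
            exact ⟨Or.inr hxb, fun h => h.elim (hb_not_a x hxb) hxn⟩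
        obtain ⟨π, hπW, hπimg⟩ := exists_perm_image
          (W := a ∪ b) (S := C₁ ∩ (a ∪ b)) (T := a ∪ b1)
          Set.inter_subset_right
          (Set.union_subset Set.subset_union_left (hb1b.trans Set.subset_union_right))
          (equiv_of_infinite hS1 (ha.mono Set.subset_union_left))
          (by rw [hWS, hWT]; exact equiv_of_infinite hR hb2)
        refine ⟨π, hX π hπW, ?_, ?_, ?_⟩
        · rw [image_of_inter hπW hπimg]
          exact fun x hx => Or.inl (Or.inl hx)
        · rw [image_of_inter hπW hπimg]
          refine Set.Infinite.mono ?_ hb1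
          intro x hx
          exact ⟨Or.inl (Or.inr hx), hb1b hx⟩
        · rw [perm_compl_image]
          exact hC1c.image (π.injective.injOn)
      · have hRfin : ((a ∪ b) \ C₁).Finite := Set.not_infinite.mp hR
        obtain ⟨F, hFb2, hFfin, hFcard⟩ :=
          hb2.exists_subset_ncard_eq (((a ∪ b) \ C₁).ncard)
        have hFW : F ⊆ a ∪ b := fun x hx => Or.inr (hFb2 hx).1
        have hWT : (a ∪ b) \ ((a ∪ b) \ F) = F := Set.diff_diff_cancel_left hFW
        have haT : a ⊆ (a ∪ b) \ F := fun x hx =>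
          ⟨Or.inl hx, fun hF => hb_not_a x (hFb2 hF).1 hx⟩
        obtain ⟨π, hπW, hπimg⟩ := exists_perm_image
          (W := a ∪ b) (S := C₁ ∩ (a ∪ b)) (T := (a ∪ b) \ F)
          Set.inter_subset_right Set.diff_subset
          (equiv_of_infinite hS1 ((ha.mono haT)))
          (by rw [hWS, hWT]; exact equiv_of_finite hRfin hFfin hFcard.symm)
        refine ⟨π, hX π hπW, ?_, ?_, ?_⟩
        · rw [image_of_inter hπW hπimg]
          exact fun x hx => Or.inl (haT hx)
        · rw [image_of_inter hπW hπimg]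
          refine Set.Infinite.mono ?_ hb1
          intro x hx
          refine ⟨Or.inl ⟨Or.inr (hb1b hx), fun hF => (hFb2 hF).2 hx⟩, hb1b hx⟩
        · rw [perm_compl_image]
          exact hC1c.image (π.injective.injOn)
    obtain ⟨k₂, hk₂H, haC2, hC2b, hC2c⟩ := stage2
    set C₂ := k₂ '' C₁ with hC₂def
    -- Stage 3 : map C₂ onto a ∪ b
    have hC2compl : C₂ᶜ ⊆ b ∪ c := by
      intro x hx
      by_contra h
      exact hx (haC2 ((mem_a x).2 h))
    have hWT3 : (b ∪ c) \ b = c := by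
      ext x
      constructor
      · rintro ⟨hx, hxb⟩
        exact hx.resolve_left hxb
      · intro hx
        exact ⟨Or.inr hx, hc_not_b x hx⟩
    obtain ⟨π₃, hπ₃W, hπ₃img⟩ := exists_perm_image
      (W := b ∪ c) (S := C₂ ∩ (b ∪ c)) (T := b)
      Set.inter_subset_right Set.subset_union_left
      (equiv_of_infinite (Set.Infinite.mono (fun x hx => ⟨hx.1, Or.inl hx.2⟩) hC2b) hb)
      (by
        rw [Set.diff_inter_self_eq_diff, hWT3]
        refine equiv_of_infinite (Set.Infinite.mono ?_ hC2c) hc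
        intro x hx
        exact ⟨hC2compl hx, hx⟩)
    have hfinal : π₃ '' C₂ = a ∪ b := by
      rw [image_of_inter hπ₃W hπ₃img]
      have : C₂ \ (b ∪ c) = a := by
        ext x
        constructor
        · rintro ⟨hx, hn⟩
          exact (mem_a x).2 hn
        · intro hx
          exact ⟨haC2 hx, fun h => (mem_a x).1 hx h⟩
      rw [this, Set.union_comm]
    refine ⟨π₃ * k₂ * k₁, H.mul_mem (H.mul_mem (hY π₃ hπ₃W) hk₂H) hk₁H, ?_⟩
    rw [perm_mul_image, perm_mul_image, ← hC₁def, ← hC₂def, hfinal]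
  -- now the main argument
  rw [Subgroup.eq_top_iff']
  intro g
  have hCinf : (g '' (a ∪ b)).Infinite :=
    (ha.mono Set.subset_union_left).image (g.injective.injOn)
  have hCcinf : ((g '' (a ∪ b))ᶜ).Infinite := by
    rw [perm_compl_image, hXc]
    exact hc.image (g.injective.injOn)
  obtain ⟨k, hkH, hkimg⟩ := claim (g '' (a ∪ b)) hCinf hCcinf
  have hinv : ∀ x, x ∈ a ∪ b ↔ (k * g) x ∈ a ∪ b := by
    have himg : (k * g) '' (a ∪ b) = a ∪ b := by
      rw [perm_mul_image, hkimg]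
    intro x
    constructor
    · intro hx
      rw [← himg]
      exact ⟨x, hx, rfl⟩
    · intro hx
      rw [← himg] at hx
      obtain ⟨y, hy, hyx⟩ := hx
      rwa [← (k * g).injective hyx]
  obtain ⟨u, v, huv, hu, hv⟩ := exists_decomp hinv
  have huH : u ∈ H := hX u hu
  have hvH : v ∈ H := by
    refine hY v (hv.mono ?_)
    rw [hXc]
    exact Set.subset_union_right
  have : g = k⁻¹ * (u * v) := by
    rw [← huv]
    group
  rw [this]
  exact H.mul_mem (H.inv_mem hkH) (H.mul_mem huH hvH)


abbrev OO : Type := ℕ × ℤ × ℤ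

def AA (n : ℤ) : Set OO := {p | p.2.1 = 0 ∧ p.2.2 = n}

lemma mem_AA {p : OO} {n : ℤ} : p ∈ AA n ↔ p.2.1 = 0 ∧ p.2.2 = n := Iff.rfl

lemma AA_infinite (n : ℤ) : (AA n).Infinite := by
  apply Set.infinite_of_injective_forall_mem (f := fun x : ℕ => ((x, 0, n) : OO))
  case hi => exact fun x y h => congrArg Prod.fst h
  case hf => exact fun x => ⟨rfl, rfl⟩

lemma AA_compl_infinite (n : ℤ) : ((AA n)ᶜ).Infinite := by
  apply Set.infinite_of_injective_forall_mem (f := fun x : ℕ => ((x, 1, n) : OO))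
  case hi => exact fun x y h => congrArg Prod.fst h
  case hf => exact fun x hx => one_ne_zero hx.1

lemma apply_block {g : Perm OO} {n : ℤ} (hg : SuppIn g (AA n)) (x : ℕ) :
    g (x, 0, n) = ((g (x, 0, n)).1, 0, n) := by
  have h2 : g (x, 0, n) ∈ AA n := (hg.mem_iff _).2 ⟨rfl, rfl⟩
  obtain ⟨hk, hm⟩ := h2
  conv_lhs => rw [show g (x, 0, n) =
    ((g (x, 0, n)).1, (g (x, 0, n)).2.1, (g (x, 0, n)).2.2) from rfl]
  rw [hk, hm]

/-- The "diagonal" permutation acting as `σ m` on every copy `{(·, k, m)} , k ≥ 0`. -/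
def blockPerm (σ : ℕ → Perm OO) (hσ : ∀ n : ℕ, SuppIn (σ n) (AA n)) : Perm OO where
  toFun p := if 0 ≤ p.2.1 ∧ 0 ≤ p.2.2 then ((σ p.2.2.toNat (p.1, 0, p.2.2)).1, p.2.1, p.2.2)
    else p
  invFun p := if 0 ≤ p.2.1 ∧ 0 ≤ p.2.2 then (((σ p.2.2.toNat)⁻¹ (p.1, 0, p.2.2)).1, p.2.1, p.2.2)
    else p
  left_inv := by
    rintro ⟨x, k, m⟩
    dsimp only
    by_cases h : 0 ≤ k ∧ 0 ≤ m
    · rw [if_pos h, if_pos h]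
      have hm : ((m.toNat : ℤ)) = m := Int.toNat_of_nonneg h.2
      have hb := apply_block (hσ m.toNat) x
      rw [hm] at hb
      have : ((σ m.toNat (x, 0, m)).1, (0 : ℤ), m) = σ m.toNat (x, 0, m) := hb.symm
      rw [this, ← Perm.mul_apply, inv_mul_cancel, Perm.one_apply]
    · rw [if_neg h, if_neg h]
  right_inv := by
    rintro ⟨x, k, m⟩
    dsimp only
    by_cases h : 0 ≤ k ∧ 0 ≤ m
    · rw [if_pos h, if_pos h]
      have hm : ((m.toNat : ℤ)) = m := Int.toNat_of_nonneg h.2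
      have hb := apply_block ((hσ m.toNat).inv) x
      rw [hm] at hb
      have : (((σ m.toNat)⁻¹ (x, 0, m)).1, (0 : ℤ), m) = (σ m.toNat)⁻¹ (x, 0, m) := hb.symm
      rw [this, ← Perm.mul_apply, mul_inv_cancel, Perm.one_apply]
    · rw [if_neg h, if_neg h]

lemma blockPerm_apply (σ : ℕ → Perm OO) (hσ : ∀ n : ℕ, SuppIn (σ n) (AA n)) (p : OO) :
    blockPerm σ hσ p = if 0 ≤ p.2.1 ∧ 0 ≤ p.2.2
      then ((σ p.2.2.toNat (p.1, 0, p.2.2)).1, p.2.1, p.2.2) else p := rfl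

lemma blockPerm_inv_apply (σ : ℕ → Perm OO) (hσ : ∀ n : ℕ, SuppIn (σ n) (AA n)) (p : OO) :
    (blockPerm σ hσ)⁻¹ p = if 0 ≤ p.2.1 ∧ 0 ≤ p.2.2
      then (((σ p.2.2.toNat)⁻¹ (p.1, 0, p.2.2)).1, p.2.1, p.2.2) else p := rfl

/-- Shift in the third coordinate. -/
def DD : Perm OO := Equiv.prodCongr (Equiv.refl ℕ) (Equiv.prodCongr (Equiv.refl ℤ)
  (Equiv.addRight (1 : ℤ)))

lemma DD_apply (p : OO) : DD p = (p.1, p.2.1, p.2.2 + 1) := rfl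

lemma DD_pow_apply (j : ℕ) (p : OO) : (DD ^ j) p = (p.1, p.2.1, p.2.2 + j) := by
  induction j with
  | zero => simp
  | succ i ih =>
    rw [pow_succ', Perm.mul_apply, ih, DD_apply]
    show (p.1, p.2.1, p.2.2 + (i : ℤ) + 1) = (p.1, p.2.1, p.2.2 + ((i : ℤ) + 1))
    rw [add_assoc]

lemma DD_pow_inv_apply (j : ℕ) (p : OO) : (DD ^ j)⁻¹ p = (p.1, p.2.1, p.2.2 - j) := by
  rw [Perm.inv_eq_iff_eq, DD_pow_apply]
  show p = (p.1, p.2.1, p.2.2 - j + j)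
  rw [sub_add_cancel]

/-- Shift in the second coordinate, on the block `m = 0` only. -/
def tZero : Perm OO where
  toFun p := if p.2.2 = 0 then (p.1, p.2.1 + 1, p.2.2) else p
  invFun p := if p.2.2 = 0 then (p.1, p.2.1 - 1, p.2.2) else p
  left_inv := by
    rintro ⟨x, k, m⟩
    dsimp only
    by_cases h : m = 0
    · rw [if_pos h, if_pos h, add_sub_cancel_right]
    · rw [if_neg h, if_neg h]
  right_inv := by
    rintro ⟨x, k, m⟩
    dsimp only
    by_cases h : m = 0
    · rw [if_pos h, if_pos h, sub_add_cancel]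
    · rw [if_neg h, if_neg h]

lemma tZero_apply (p : OO) : tZero p = if p.2.2 = 0 then (p.1, p.2.1 + 1, p.2.2) else p := rfl

lemma tn_apply (n : ℕ) (p : OO) : (DD ^ n * tZero * (DD ^ n)⁻¹) p =
    if p.2.2 = n then (p.1, p.2.1 + 1, p.2.2) else p := by
  rw [Perm.mul_apply, Perm.mul_apply, DD_pow_inv_apply, tZero_apply]
  dsimp only
  by_cases h : p.2.2 = (n : ℤ)
  · rw [if_pos (sub_eq_zero.mpr h), if_pos h, DD_pow_apply]
    show (p.1, p.2.1 + 1, p.2.2 - n + n) = (p.1, p.2.1 + 1, p.2.2)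
    rw [sub_add_cancel]
  · rw [if_neg (fun hc => h (sub_eq_zero.mp hc)), if_neg h, DD_pow_apply]
    show (p.1, p.2.1, p.2.2 - n + n) = p
    rw [sub_add_cancel]

lemma tn_inv_apply (n : ℕ) (p : OO) : (DD ^ n * tZero * (DD ^ n)⁻¹)⁻¹ p =
    if p.2.2 = n then (p.1, p.2.1 - 1, p.2.2) else p := by
  rw [Perm.inv_eq_iff_eq, tn_apply]
  by_cases h : p.2.2 = (n : ℤ)
  · rw [if_pos h, if_pos h]
    show p = (p.1, p.2.1 - 1 + 1, p.2.2)
    rw [sub_add_cancel]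
  · rw [if_neg h, if_neg h]

lemma commutator_eq (σ : ℕ → Perm OO) (hσ : ∀ n : ℕ, SuppIn (σ n) (AA n)) (n : ℕ) :
    σ n = blockPerm σ hσ * (DD ^ n * tZero * (DD ^ n)⁻¹) * (blockPerm σ hσ)⁻¹ *
      (DD ^ n * tZero * (DD ^ n)⁻¹)⁻¹ := by
  set a := blockPerm σ hσ with ha
  apply Equiv.ext
  rintro ⟨x, k, m⟩
  rw [Perm.mul_apply, Perm.mul_apply, Perm.mul_apply]
  by_cases hm : m = (n : ℤ)
  · subst hm
    rcases lt_trichotomy k 0 with hk | hk | hk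
    · have h1 : (DD ^ n * tZero * (DD ^ n)⁻¹)⁻¹ ((x, k, (n : ℤ)) : OO) = (x, k - 1, (n : ℤ)) := by
        rw [tn_inv_apply, if_pos rfl]
      have h2 : a⁻¹ ((x, k - 1, (n : ℤ)) : OO) = (x, k - 1, (n : ℤ)) := by
        rw [ha, blockPerm_inv_apply, if_neg]
        rintro ⟨h, -⟩
        dsimp only at h
        omega
      have h3 : (DD ^ n * tZero * (DD ^ n)⁻¹) ((x, k - 1, (n : ℤ)) : OO) = (x, k, (n : ℤ)) := by
        rw [tn_apply, if_pos rfl]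
        dsimp only
        rw [sub_add_cancel]
      have h4 : a ((x, k, (n : ℤ)) : OO) = (x, k, (n : ℤ)) := by
        rw [ha, blockPerm_apply, if_neg]
        rintro ⟨h, -⟩
        dsimp only at h
        omega
      rw [h1, h2, h3, h4]
      exact hσ n _ (fun hc => absurd hc.1 (by simpa using hk.ne))
    · subst hk
      have h1 : (DD ^ n * tZero * (DD ^ n)⁻¹)⁻¹ ((x, 0, (n : ℤ)) : OO) =
          (x, (0 : ℤ) - 1, (n : ℤ)) := by
        rw [tn_inv_apply, if_pos rfl]
      have h2 : a⁻¹ ((x, (0 : ℤ) - 1, (n : ℤ)) : OO) = (x, (0 : ℤ) - 1, (n : ℤ)) := by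
        rw [ha, blockPerm_inv_apply, if_neg]
        rintro ⟨h, -⟩
        dsimp only at h
        omega
      have harith : (0 : ℤ) - 1 + 1 = 0 := by norm_num
      have h3 : (DD ^ n * tZero * (DD ^ n)⁻¹) ((x, (0 : ℤ) - 1, (n : ℤ)) : OO) =
          (x, 0, (n : ℤ)) := by
        rw [tn_apply, if_pos rfl]
        dsimp only
        rw [harith]
      have h4 : a ((x, 0, (n : ℤ)) : OO) = ((σ n ((x, 0, (n : ℤ)) : OO)).1, 0, (n : ℤ)) := by
        rw [ha, blockPerm_apply, if_pos ⟨le_refl _, Int.natCast_nonneg n⟩]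
        dsimp only
        rw [Int.toNat_natCast]
      rw [h1, h2, h3, h4]
      exact apply_block (hσ n) x
    · have h1 : (DD ^ n * tZero * (DD ^ n)⁻¹)⁻¹ ((x, k, (n : ℤ)) : OO) = (x, k - 1, (n : ℤ)) := by
        rw [tn_inv_apply, if_pos rfl]
      have h2 : a⁻¹ ((x, k - 1, (n : ℤ)) : OO) =
          (((σ n)⁻¹ ((x, 0, (n : ℤ)) : OO)).1, k - 1, (n : ℤ)) := by
        rw [ha, blockPerm_inv_apply, if_pos ⟨show (0:ℤ) ≤ k - 1 by omega, Int.natCast_nonneg n⟩]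
        dsimp only
        rw [Int.toNat_natCast]
      have h3 : (DD ^ n * tZero * (DD ^ n)⁻¹)
          ((((σ n)⁻¹ ((x, 0, (n : ℤ)) : OO)).1, k - 1, (n : ℤ)) : OO) =
          (((σ n)⁻¹ ((x, 0, (n : ℤ)) : OO)).1, k, (n : ℤ)) := by
        rw [tn_apply, if_pos rfl]
        dsimp only
        rw [sub_add_cancel]
      have h4 : a ((((σ n)⁻¹ ((x, 0, (n : ℤ)) : OO)).1, k, (n : ℤ)) : OO) = (x, k, (n : ℤ)) := by
        rw [ha, blockPerm_apply, if_pos ⟨show (0:ℤ) ≤ k by omega, Int.natCast_nonneg n⟩]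
        dsimp only
        rw [Int.toNat_natCast]
        rw [show ((((σ n)⁻¹ ((x, 0, (n : ℤ)) : OO)).1, (0 : ℤ), (n : ℤ)) : OO) =
          (σ n)⁻¹ ((x, 0, (n : ℤ)) : OO) from (apply_block (hσ n).inv x).symm]
        rw [← Perm.mul_apply, mul_inv_cancel, Perm.one_apply]
      rw [h1, h2, h3, h4]
      exact hσ n _ (fun hc => absurd hc.1 (by simpa using hk.ne'))
  · have h1 : (DD ^ n * tZero * (DD ^ n)⁻¹)⁻¹ ((x, k, m) : OO) = (x, k, m) := by
      rw [tn_inv_apply, if_neg hm]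
    have hq : (a⁻¹ ((x, k, m) : OO)).2.2 = m := by
      rw [ha, blockPerm_inv_apply]
      split_ifs <;> rfl
    have h3 : (DD ^ n * tZero * (DD ^ n)⁻¹) (a⁻¹ ((x, k, m) : OO)) = a⁻¹ ((x, k, m) : OO) := by
      rw [tn_apply, if_neg]
      rw [hq]
      exact hm
    rw [h1, h3, ← Perm.mul_apply, mul_inv_cancel, Perm.one_apply]
    exact hσ n _ (fun hc => hm hc.2)

theorem mainOO (G : ℕ → Subgroup (Perm OO)) (hmono : Monotone G)
    (hcover : ∀ g : Perm OO, ∃ n, g ∈ G n) : ∃ n, G n = ⊤ := by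
  by_cases hfull : ∃ (N : ℕ) (n : ℕ), ∀ g : Perm OO, SuppIn g (AA n) → g ∈ G N
  · obtain ⟨N, n, hN⟩ := hfull
    set aS : Set OO := {p | p.2.2 < 0} with haS
    set bS : Set OO := {p | p.2.2 = 0} with hbS
    set cS : Set OO := {p | 0 < p.2.2} with hcS
    have hainf : aS.Infinite := by
      apply Set.infinite_of_injective_forall_mem (f := fun x : ℕ => ((x, 0, -1) : OO))
      case hi => exact fun x y h => congrArg Prod.fst h
      case hf => intro x; show (-1 : ℤ) < 0; norm_num
    have hbinf : bS.Infinite := by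
      apply Set.infinite_of_injective_forall_mem (f := fun x : ℕ => ((x, 0, 0) : OO))
      case hi => exact fun x y h => congrArg Prod.fst h
      case hf => intro x; show (0 : ℤ) = 0; norm_num
    have hcinf : cS.Infinite := by
      apply Set.infinite_of_injective_forall_mem (f := fun x : ℕ => ((x, 0, 1) : OO))
      case hi => exact fun x y h => congrArg Prod.fst h
      case hf => intro x; show (0 : ℤ) < 1; norm_num
    have hXc : (aS ∪ bS)ᶜ = cS := by
      ext p
      simp only [haS, hbS, hcS, Set.mem_compl_iff, Set.mem_union, Set.mem_setOf_eq]
      omega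
    have hYc : (bS ∪ cS)ᶜ = aS := by
      ext p
      simp only [haS, hbS, hcS, Set.mem_compl_iff, Set.mem_union, Set.mem_setOf_eq]
      omega
    -- conjugators
    have hconj : ∀ T : Set OO, T.Infinite → (Tᶜ).Infinite →
        ∃ u : Perm OO, u '' (AA n) = T := by
      intro T hT hTc
      obtain ⟨u, -, hu⟩ := exists_perm_image (Set.subset_univ (AA n)) (Set.subset_univ T)
        (equiv_of_infinite (AA_infinite n) hT)
        (by
          rw [← Set.compl_eq_univ_diff, ← Set.compl_eq_univ_diff]
          exact equiv_of_infinite (AA_compl_infinite n) hTc)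
      exact ⟨u, hu⟩
    obtain ⟨u₁, hu₁⟩ := hconj (aS ∪ bS) (hainf.mono Set.subset_union_left)
      (by rw [hXc]; exact hcinf)
    obtain ⟨u₂, hu₂⟩ := hconj (bS ∪ cS) (hbinf.mono Set.subset_union_left)
      (by rw [hYc]; exact hainf)
    obtain ⟨i1, hi1⟩ := hcover u₁
    obtain ⟨i2, hi2⟩ := hcover u₂
    set M := max N (max i1 i2) with hM
    have hNM : N ≤ M := le_max_left _ _
    have hgenc : ∀ (u : Perm OO) (T : Set OO), u '' (AA n) = T → u ∈ G M →
        ∀ g : Perm OO, SuppIn g T → g ∈ G M := by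
      intro u T huT huM g hg
      set w : Perm OO := u⁻¹ with hw
      have h5 : SuppIn (w * g * w⁻¹) (w '' T) := hg.conj
      rw [hw, inv_inv] at h5
      have h6 : w '' T = AA n := by
        rw [← huT, Set.image_image, hw]
        have : ∀ x : OO, u⁻¹ (u x) = x := fun x => by rw [← Perm.mul_apply, inv_mul_cancel, Perm.one_apply]
        simp only [this, Set.image_id']
      rw [h6] at h5
      have h7 : u⁻¹ * g * u ∈ G M := hmono hNM (hN _ h5)
      have h8 : g = u * (u⁻¹ * g * u) * u⁻¹ := by group
      rw [h8]
      exact mul_mem (mul_mem huM h7) (inv_mem huM)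
    refine ⟨M, step2 hXc hYc hainf hbinf hcinf ?_ ?_⟩
    · exact hgenc u₁ _ hu₁ (hmono (le_trans (le_max_left i1 i2) (le_max_right N _)) hi1)
    · exact hgenc u₂ _ hu₂ (hmono (le_trans (le_max_right i1 i2) (le_max_right N _)) hi2)
  · push_neg at hfull
    exfalso
    have hsel : ∀ k : ℕ, ∃ g : Perm OO, SuppIn g (AA k) ∧ g ∉ G k := fun k => by
      obtain ⟨g, hg1, hg2⟩ := hfull k k
      exact ⟨g, hg1, hg2⟩
    set σ : ℕ → Perm OO := fun k => (hsel k).choose with hσdef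
    have hσ : ∀ k : ℕ, SuppIn (σ k) (AA k) := fun k => (hsel k).choose_spec.1
    have hσnot : ∀ k : ℕ, σ k ∉ G k := fun k => (hsel k).choose_spec.2
    obtain ⟨ia, hia⟩ := hcover (blockPerm σ hσ)
    obtain ⟨ib, hib⟩ := hcover tZero
    obtain ⟨ic, hic⟩ := hcover DD
    set K := max ia (max ib ic) with hK
    have haK : blockPerm σ hσ ∈ G K := hmono (le_max_left _ _) hia
    have hbK : tZero ∈ G K := hmono (le_trans (le_max_left ib ic) (le_max_right ia _)) hib
    have hcK : DD ∈ G K := hmono (le_trans (le_max_right ib ic) (le_max_right ia _)) hic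
    have htK : DD ^ K * tZero * (DD ^ K)⁻¹ ∈ G K :=
      mul_mem (mul_mem (pow_mem hcK K) hbK) (inv_mem (pow_mem hcK K))
    have : σ K ∈ G K := by
      rw [commutator_eq σ hσ K]
      exact mul_mem (mul_mem (mul_mem haK htK) (inv_mem haK)) (inv_mem htK)
    exact hσnot K this

noncomputable def permTransfer : Perm OO →* Perm ℕ where
  toFun f := ((Denumerable.eqv OO).symm.trans (f.trans (Denumerable.eqv OO)))
  map_one' := by ext x; simp
  map_mul' f g := by ext x; simp

lemma permTransfer_surjective : Function.Surjective permTransfer := by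
  intro h
  refine ⟨(Denumerable.eqv OO).trans (h.trans (Denumerable.eqv OO).symm), ?_⟩
  ext x
  simp [permTransfer]


end MN

/-- Macpherson–Neumann: `Sym(ω)` is not the union of a countable increasing
chain of proper subgroups, i.e. `c(Sym(ω)) > ℵ₀`. -/
theorem stmt_12 (G : ℕ → Subgroup (Equiv.Perm ℕ)) (hmono : Monotone G)
    (hcover : ∀ g : Equiv.Perm ℕ, ∃ n, g ∈ G n) :
    ∃ n, G n = ⊤ := by
  set G' : ℕ → Subgroup (Equiv.Perm MN.OO) := fun n => (G n).comap MN.permTransfer with hG'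
  obtain ⟨n, hn⟩ := MN.mainOO G' (fun i j hij => Subgroup.comap_mono (hmono hij))
    (fun g => hcover (MN.permTransfer g))
  refine ⟨n, ?_⟩
  rw [Subgroup.eq_top_iff']
  intro h
  obtain ⟨g, rfl⟩ := MN.permTransfer_surjective h
  have : g ∈ G' n := hn ▸ Subgroup.mem_top g
  exact this
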